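/- Let X be a compact metric space, Q : X → [0,∞) continuous, and suppose X is Q-amenable, i.e., 0 < λ^{Q_c}(B) < ∞ for every non-empty open ball B of finite radius, where λ^{Q_c} is the spherical measure with weight |B_r(x)|^{Q(x)}. Then dim_loc(x) = Q(x) for all x ∈ X. -/

import Mathlib

open Set MeasureTheory ENNReal

/-- The local Hausdorff dimension: `dim_loc(x) = inf { dim_H U : U open neighborhood of x }`. -/
noncomputable def dimLoc {X : Type*} [MetricSpace X] [MeasurableSpace X] [BorelSpace X]
    (x : X) : ℝ≥0∞ :=
  ⨅ (U : Set X) (_ : IsOpen U) (_ : x ∈ U), dimH U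

/-- The spherical Carathéodory measure `λ^{Q_c}` with weight `|B_r(x)|^{Q(x)}` on open
balls (weight `∞` for sets that are not open balls, realized as an infimum over ball
representations). -/
noncomputable def lambdaQc (X : Type*) [MetricSpace X] [MeasurableSpace X] [BorelSpace X]
    (Q : X → ℝ) : Measure X :=
  Measure.mkMetric'
    (fun U => ⨅ (x : X) (r : ℝ≥0∞) (_ : U = EMetric.ball x r), EMetric.diam U ^ Q x)

section Aux

set_option linter.unusedSectionVars false

variable {X : Type*} [MetricSpace X] [MeasurableSpace X] [BorelSpace X]

noncomputable def mQw (Q : X → ℝ) : Set X → ℝ≥0∞ :=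
  fun U => ⨅ (x : X) (r : ℝ≥0∞) (_ : U = EMetric.ball x r), EMetric.diam U ^ Q x

lemma lambdaQc_apply (Q : X → ℝ) {A : Set X} (hA : MeasurableSet A) :
    lambdaQc X Q A = ⨆ (r : ℝ≥0∞) (_ : 0 < r), OuterMeasure.mkMetric'.pre (mQw Q) r A := by
  have h1 : lambdaQc X Q A = (OuterMeasure.mkMetric' (mQw Q)).toMeasure
      (OuterMeasure.mkMetric'_isMetric _).le_caratheodory A := rfl
  rw [h1, toMeasure_apply _ _ hA, OuterMeasure.mkMetric']
  simp [OuterMeasure.iSup_apply]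

lemma hausdorff_pre_apply (d : ℝ) (A : Set X) :
    μH[d] A = ⨆ (r : ℝ≥0∞) (_ : 0 < r),
      OuterMeasure.mkMetric'.pre (fun U => EMetric.diam U ^ d) r A := by
  have h1 : μH[d] A = OuterMeasure.mkMetric (fun x => x ^ d) A := by
    rw [OuterMeasure.coe_mkMetric]; rfl
  rw [h1, OuterMeasure.mkMetric, OuterMeasure.mkMetric']
  simp [OuterMeasure.iSup_apply]
  rfl

lemma pre_le_pre {m₁ m₂ : Set X → ℝ≥0∞} {r : ℝ≥0∞} {A : Set X}
    (h : ∀ U : Set X, U.Nonempty → (U ∩ A).Nonempty → EMetric.diam U ≤ r → m₁ U ≤ m₂ U) :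
    OuterMeasure.mkMetric'.pre m₁ r A ≤ OuterMeasure.mkMetric'.pre m₂ r A := by
  classical
  simp only [OuterMeasure.mkMetric'.pre, OuterMeasure.boundedBy_apply]
  refine le_iInf₂ fun t ht => ?_
  set t' : ℕ → Set X := fun n => if (t n ∩ A).Nonempty then t n else ∅ with ht'
  have hcov : A ⊆ ⋃ n, t' n := by
    intro a ha
    rcases mem_iUnion.1 (ht ha) with ⟨n, hn⟩
    refine mem_iUnion.2 ⟨n, ?_⟩
    have he : t' n = t n := if_pos ⟨a, hn, ha⟩
    rw [he]; exact hn
  refine le_trans (iInf₂_le t' hcov) (ENNReal.tsum_le_tsum fun n => ?_)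
  by_cases hn : (t n ∩ A).Nonempty
  · simp only [ht', if_pos hn]
    refine iSup_le fun hne => le_iSup_of_le hne ?_
    simp only [extend, le_iInf_iff]
    intro hd
    exact le_trans (iInf_le _ hd) (h _ hne hn hd)
  · simp [ht', if_neg hn]

lemma hausdorff_le_lambdaQc (Q : X → ℝ) {A : Set X} (hA : MeasurableSet A) (s : ℝ)
    {r₀ : ℝ≥0∞} (hr₀ : 0 < r₀)
    (h : ∀ U : Set X, U.Nonempty → (U ∩ A).Nonempty → EMetric.diam U ≤ r₀ →
      EMetric.diam U ^ s ≤ mQw Q U) :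
    μH[s] A ≤ lambdaQc X Q A := by
  rw [hausdorff_pre_apply, lambdaQc_apply Q hA]
  refine iSup₂_le fun r hr => ?_
  refine le_trans (OuterMeasure.mkMetric'.mono_pre _ (min_le_left r r₀) A) ?_
  refine le_trans (pre_le_pre fun U h1 h2 h3 => h U h1 h2 (le_trans h3 (min_le_right r r₀))) ?_
  exact le_iSup₂ (f := fun r (_ : 0 < r) => OuterMeasure.mkMetric'.pre (mQw Q) r A)
    (min r r₀) (lt_min hr hr₀)

lemma lambdaQc_le_hausdorff (Q : X → ℝ) {A : Set X} (hA : MeasurableSet A) {s : ℝ}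
    (hs : 0 < s) (hQA : ∀ a ∈ A, s ≤ Q a) :
    lambdaQc X Q A ≤ (4 : ℝ≥0∞) ^ s * μH[s] A := by
  classical
  have h4s_ne_top : (4:ℝ≥0∞) ^ s ≠ ∞ := ENNReal.rpow_ne_top_of_nonneg hs.le (by norm_num)
  by_cases htop : μH[s] A = ∞
  · rw [htop, ENNReal.mul_top (by simp [ENNReal.rpow_eq_zero_iff])]
    exact le_top
  rw [lambdaQc_apply Q hA]
  refine iSup₂_le fun ρ hρ => ?_
  refine ENNReal.le_of_forall_pos_le_add fun ε hε _ => ?_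
  set δ : ℝ≥0∞ := (ε : ℝ≥0∞) / ((4:ℝ≥0∞) ^ s + 1) with hδdef
  have hδ0 : 0 < δ := ENNReal.div_pos (by exact_mod_cast hε.ne')
    (by simp [ENNReal.add_eq_top, h4s_ne_top])
  have hδtop : δ ≠ ∞ :=
    (ENNReal.div_lt_top (by simp) (by simp)).ne
  set r' : ℝ≥0∞ := min (ρ / 4) 4⁻¹ with hr'def
  have hr'0 : 0 < r' := lt_min (ENNReal.div_pos hρ.ne' (by norm_num)) (by norm_num)
  have hr'4 : 4 * r' ≤ ρ := by
    calc 4 * r' ≤ 4 * (ρ/4) := by gcongr; exact min_le_left _ _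
    _ ≤ ρ := ENNReal.mul_div_le
  have hr'1 : 4 * r' ≤ 1 := by
    calc 4 * r' ≤ 4 * 4⁻¹ := by gcongr; exact min_le_right _ _
    _ = 1 := ENNReal.mul_inv_cancel (by norm_num) (by norm_num)
  -- near-optimal cover for the Hausdorff pre-measure at scale r'
  have hlt : OuterMeasure.mkMetric'.pre (fun U => EMetric.diam U ^ s) r' A < μH[s] A + δ := by
    refine lt_of_le_of_lt ?_ (ENNReal.lt_add_right htop hδ0.ne')
    rw [hausdorff_pre_apply]
    exact le_iSup₂ (f := fun r (_:0<r) =>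
      OuterMeasure.mkMetric'.pre (fun U => EMetric.diam U ^ s) r A) r' hr'0
  rw [OuterMeasure.mkMetric'.pre, OuterMeasure.boundedBy_apply, iInf_lt_iff] at hlt
  obtain ⟨t, hlt⟩ := hlt
  rw [iInf_lt_iff] at hlt
  obtain ⟨htA, htS⟩ := hlt
  have hSfin : (∑' n, ⨆ _ : (t n).Nonempty,
      extend (fun U (_ : EMetric.diam U ≤ r') => EMetric.diam U ^ s) (t n)) ≠ ∞ :=
    (htS.trans (ENNReal.add_lt_top.2 ⟨lt_top_iff_ne_top.2 htop, lt_top_iff_ne_top.2 hδtop⟩)).ne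
  have hdiam : ∀ n, (t n).Nonempty → EMetric.diam (t n) ≤ r' := by
    intro n hn
    by_contra hd
    apply hSfin
    refine ENNReal.tsum_eq_top_of_eq_top ⟨n, ?_⟩
    rw [iSup_pos hn]
    exact extend_eq_top _ hd
  have hdiam_netop : ∀ n, (t n).Nonempty → EMetric.diam (t n) ≠ ∞ := fun n hn =>
    ((hdiam n hn).trans_lt (lt_of_le_of_lt (min_le_right _ _) (by norm_num))).ne
  -- small corrections
  set e : ℕ → ℝ≥0∞ := fun n => min r' ((δ * 2⁻¹ ^ (n+1) / (4:ℝ≥0∞) ^ s) ^ (1/s)) with he_def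
  have hnum_ne : ∀ n : ℕ, δ * (2:ℝ≥0∞)⁻¹ ^ (n+1) ≠ 0 := fun n =>
    mul_ne_zero hδ0.ne' (pow_ne_zero _ (by simp))
  have he0 : ∀ n, 0 < e n := fun n => lt_min hr'0
    (ENNReal.rpow_pos_of_nonneg (ENNReal.div_pos (hnum_ne n) h4s_ne_top) (by positivity))
  have heS : ∀ n, (4:ℝ≥0∞)^s * (e n) ^ s ≤ δ * 2⁻¹ ^ (n+1) := by
    intro n
    have h1 : (e n) ^ s ≤ δ * 2⁻¹ ^ (n+1) / (4:ℝ≥0∞)^s := by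
      calc (e n)^s ≤ ((δ * 2⁻¹ ^ (n+1) / (4:ℝ≥0∞) ^ s) ^ (1/s)) ^ s :=
        ENNReal.rpow_le_rpow (min_le_right _ _) hs.le
      _ = _ := by
        rw [← ENNReal.rpow_mul, one_div, inv_mul_cancel₀ hs.ne', ENNReal.rpow_one]
    calc (4:ℝ≥0∞)^s * (e n)^s ≤ (4:ℝ≥0∞)^s * (δ * 2⁻¹ ^ (n+1) / (4:ℝ≥0∞)^s) := by gcongr
      _ ≤ δ * 2⁻¹ ^ (n+1) := ENNReal.mul_div_le
  -- cover by balls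
  set u : ℕ → Set X := fun n => if h : (t n ∩ A).Nonempty
    then EMetric.ball h.choose (EMetric.diam (t n) + e n) else ∅ with hu_def
  have hucov : A ⊆ ⋃ n, u n := by
    intro a ha
    rcases mem_iUnion.1 (htA ha) with ⟨n, hn⟩
    have hne : (t n ∩ A).Nonempty := ⟨a, hn, ha⟩
    refine mem_iUnion.2 ⟨n, ?_⟩
    have hu : u n = EMetric.ball hne.choose (EMetric.diam (t n) + e n) := dif_pos hne
    rw [hu]; refine EMetric.mem_ball.2 ?_
    calc edist a hne.choose ≤ EMetric.diam (t n) :=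
          EMetric.edist_le_diam_of_mem hn hne.choose_spec.1
      _ < EMetric.diam (t n) + e n :=
          ENNReal.lt_add_right (hdiam_netop n ⟨a, hn⟩) (he0 n).ne'
  -- termwise estimate
  have hterm : ∀ n,
      (⨆ _ : (u n).Nonempty, extend (fun U (_ : EMetric.diam U ≤ ρ) => mQw Q U) (u n))
        ≤ (4:ℝ≥0∞)^s * (⨆ _ : (t n).Nonempty, EMetric.diam (t n) ^ s) + δ * 2⁻¹ ^ (n+1) := by
    intro n
    by_cases hn : (t n ∩ A).Nonempty
    · have htn : (t n).Nonempty := hn.mono inter_subset_left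
      have hd := hdiam n htn
      have hu : u n = EMetric.ball hn.choose (EMetric.diam (t n) + e n) := dif_pos hn
      have hyA : hn.choose ∈ A := hn.choose_spec.2
      have hdu2 : EMetric.diam (u n) ≤ 4 * r' := by
        rw [hu]
        refine le_trans EMetric.diam_ball ?_
        calc 2 * (EMetric.diam (t n) + e n) ≤ 2 * (r' + r') := by
              gcongr
              exact min_le_left _ _
          _ = 4 * r' := by ring
      have hdu : EMetric.diam (u n) ≤ ρ := hdu2.trans hr'4
      have hdu1 : EMetric.diam (u n) ≤ 1 := hdu2.trans hr'1
      refine iSup_le fun _ => ?_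
      rw [extend_eq (fun U (_ : EMetric.diam U ≤ ρ) => mQw Q U) hdu]
      have h1 : mQw Q (u n) ≤ EMetric.diam (u n) ^ Q hn.choose := by
        refine iInf₂_le_of_le hn.choose (EMetric.diam (t n) + e n) ?_
        exact iInf_le _ hu
      have h2 : EMetric.diam (u n) ^ Q hn.choose ≤ EMetric.diam (u n) ^ s :=
        ENNReal.rpow_le_rpow_of_exponent_ge hdu1 (hQA _ hyA)
      have h3 : EMetric.diam (u n) ^ s
          ≤ ((4:ℝ≥0∞) * max (EMetric.diam (t n)) (e n)) ^ s := by
        refine ENNReal.rpow_le_rpow ?_ hs.le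
        refine le_trans ((le_of_eq (congrArg EMetric.diam hu)).trans EMetric.diam_ball) ?_
        calc 2 * (EMetric.diam (t n) + e n)
            ≤ 2 * (max (EMetric.diam (t n)) (e n) + max (EMetric.diam (t n)) (e n)) := by
              gcongr
              · exact le_max_left _ _
              · exact le_max_right _ _
          _ = 4 * max (EMetric.diam (t n)) (e n) := by ring
      have h4 : ((4:ℝ≥0∞) * max (EMetric.diam (t n)) (e n)) ^ s
          ≤ (4:ℝ≥0∞)^s * EMetric.diam (t n) ^ s + (4:ℝ≥0∞)^s * (e n)^s := by
        rw [ENNReal.mul_rpow_of_nonneg _ _ hs.le]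
        rcases le_total (EMetric.diam (t n)) (e n) with hc | hc
        · rw [max_eq_right hc]; exact le_add_self
        · rw [max_eq_left hc]; exact le_self_add
      rw [iSup_pos htn]
      calc mQw Q (u n) ≤ EMetric.diam (u n) ^ Q hn.choose := h1
        _ ≤ EMetric.diam (u n) ^ s := h2
        _ ≤ ((4:ℝ≥0∞) * max (EMetric.diam (t n)) (e n)) ^ s := h3
        _ ≤ (4:ℝ≥0∞)^s * EMetric.diam (t n) ^ s + (4:ℝ≥0∞)^s * (e n)^s := h4
        _ ≤ (4:ℝ≥0∞)^s * EMetric.diam (t n) ^ s + δ * 2⁻¹ ^ (n+1) :=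
            add_le_add le_rfl (heS n)
    · have hu : u n = ∅ := dif_neg hn
      rw [hu]
      simp
  -- put everything together
  have hpre : OuterMeasure.mkMetric'.pre (mQw Q) ρ A
      ≤ ∑' n, ⨆ _ : (u n).Nonempty,
          extend (fun U (_ : EMetric.diam U ≤ ρ) => mQw Q U) (u n) := by
    rw [OuterMeasure.mkMetric'.pre, OuterMeasure.boundedBy_apply]
    exact iInf₂_le u hucov
  have hgeom : (∑' n : ℕ, δ * (2:ℝ≥0∞)⁻¹ ^ (n+1)) = δ := by
    rw [ENNReal.tsum_mul_left]
    have : (∑' n : ℕ, (2:ℝ≥0∞)⁻¹ ^ (n+1)) = 1 := by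
      simp_rw [pow_succ']
      rw [ENNReal.tsum_mul_left, ENNReal.tsum_geometric, ENNReal.one_sub_inv_two, inv_inv,
        ENNReal.inv_mul_cancel (by norm_num) (by norm_num)]
    rw [this, mul_one]
  have hTS : (∑' n, ⨆ _ : (t n).Nonempty, EMetric.diam (t n) ^ s)
      ≤ μH[s] A + δ := by
    refine le_trans (ENNReal.tsum_le_tsum fun n => ?_) htS.le
    refine iSup_le fun hn => le_iSup_of_le hn ?_
    exact (extend_eq (fun U (_ : EMetric.diam U ≤ r') => EMetric.diam U ^ s) (hdiam n hn)).ge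
  calc OuterMeasure.mkMetric'.pre (mQw Q) ρ A
      ≤ ∑' n, ⨆ _ : (u n).Nonempty,
          extend (fun U (_ : EMetric.diam U ≤ ρ) => mQw Q U) (u n) := hpre
    _ ≤ ∑' n, ((4:ℝ≥0∞)^s * (⨆ _ : (t n).Nonempty, EMetric.diam (t n) ^ s)
          + δ * 2⁻¹ ^ (n+1)) := ENNReal.tsum_le_tsum hterm
    _ = (4:ℝ≥0∞)^s * (∑' n, ⨆ _ : (t n).Nonempty, EMetric.diam (t n) ^ s)
          + (∑' n : ℕ, δ * (2:ℝ≥0∞)⁻¹ ^ (n+1)) := by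
        rw [ENNReal.tsum_add, ENNReal.tsum_mul_left]
    _ ≤ (4:ℝ≥0∞)^s * (μH[s] A + δ) + δ := by
        rw [hgeom]
        gcongr
    _ = (4:ℝ≥0∞)^s * μH[s] A + ((4:ℝ≥0∞)^s + 1) * δ := by ring
    _ ≤ (4:ℝ≥0∞)^s * μH[s] A + ε := by
        gcongr
        rw [hδdef]
        exact ENNReal.mul_div_le


end Aux

/-- If `X` is compact, `Q : X → [0,∞)` is continuous and `X` is `Q`-amenable
(`0 < λ^{Q_c}(B) < ∞` for every nonempty open ball `B` of finite radius), then
`dim_loc(x) = Q(x)` for all `x`. -/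
theorem dimLoc_eq_of_amenable {X : Type*} [MetricSpace X] [MeasurableSpace X]
    [BorelSpace X] [CompactSpace X] (Q : X → ℝ) (hQ0 : ∀ x, 0 ≤ Q x)
    (hQcont : Continuous Q)
    (ham : ∀ (x : X) (r : ℝ≥0∞), 0 < r → r < ⊤ → (EMetric.ball x r).Nonempty →
      0 < lambdaQc X Q (EMetric.ball x r) ∧ lambdaQc X Q (EMetric.ball x r) < ⊤) :
    ∀ x : X, dimLoc x = ENNReal.ofReal (Q x) := by
  intro x
  refine le_antisymm ?_ ?_
  · -- upper bound
    refine ENNReal.le_of_forall_pos_le_add fun ε hε _ => ?_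
    have hε' : (0:ℝ) < ε := hε
    set s : ℝ := Q x + ε with hs_def
    have hsx : Q x < s := lt_add_of_pos_right _ hε'
    have hs0 : 0 ≤ s := le_trans (hQ0 x) hsx.le
    have hVopen : IsOpen (Q ⁻¹' Iio s) := isOpen_Iio.preimage hQcont
    obtain ⟨η, hη0, hηV⟩ := EMetric.isOpen_iff.1 hVopen x hsx
    set δ : ℝ≥0∞ := min (η / 3) 1 with hδ_def
    have hδ0 : 0 < δ := lt_min (ENNReal.div_pos hη0.ne' (by norm_num)) one_pos
    have hδ1 : δ ≤ 1 := min_le_right _ _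
    have hδη : δ + δ ≤ η := by
      rw [← two_mul]
      calc 2 * δ ≤ 2 * (η / 3) := by gcongr; exact min_le_left _ _
        _ ≤ 3 * (η / 3) := by gcongr <;> norm_num
        _ ≤ η := ENNReal.mul_div_le
    set A := EMetric.ball x δ with hA_def
    have hQle : ∀ U : Set X, U.Nonempty → (U ∩ A).Nonempty → EMetric.diam U ≤ δ →
        EMetric.diam U ^ s ≤ mQw Q U := by
      intro U hU hUA hdU
      refine le_iInf fun y => le_iInf fun r => le_iInf fun hrep => ?_
      have hr0 : 0 < r := by
        obtain ⟨z, hz⟩ := hU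
        rw [hrep] at hz
        exact zero_le.trans_lt (EMetric.mem_ball.1 hz)
      have hyU : y ∈ U := by rw [hrep]; exact EMetric.mem_ball_self hr0
      obtain ⟨a, haU, haA⟩ := hUA
      have hyx : edist y x < η := by
        have h1 : edist y x ≤ δ + edist a x :=
          le_trans (edist_triangle y a x)
            (add_le_add_left ((EMetric.edist_le_diam_of_mem hyU haU).trans hdU) _)
        have h2 : δ + edist a x < δ + δ :=
          ENNReal.add_lt_add_left (lt_of_le_of_lt hδ1 (by norm_num)).ne
            (EMetric.mem_ball.1 haA)
        exact lt_of_le_of_lt h1 (lt_of_lt_of_le h2 hδη)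
      have hQy : Q y ≤ s := le_of_lt (hηV (EMetric.mem_ball.2 hyx))
      exact ENNReal.rpow_le_rpow_of_exponent_ge (hdU.trans hδ1) hQy
    have hfin := (ham x δ hδ0 (lt_of_le_of_lt hδ1 (by norm_num))
      ⟨x, EMetric.mem_ball_self hδ0⟩).2
    have hHfin : μH[s] A < ⊤ :=
      lt_of_le_of_lt (hausdorff_le_lambdaQc Q EMetric.isOpen_ball.measurableSet s hδ0 hQle) hfin
    have hdim : dimH A ≤ (s.toNNReal : ℝ≥0∞) := by
      refine dimH_le_of_hausdorffMeasure_ne_top ?_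
      rw [Real.coe_toNNReal s hs0]
      exact hHfin.ne
    have hloc : dimLoc x ≤ dimH A := by
      refine iInf₂_le_of_le A EMetric.isOpen_ball ?_
      exact iInf_le _ (EMetric.mem_ball_self hδ0)
    calc dimLoc x ≤ (s.toNNReal : ℝ≥0∞) := le_trans hloc hdim
      _ = ENNReal.ofReal s := rfl
      _ ≤ ENNReal.ofReal (Q x) + ENNReal.ofReal ε := ENNReal.ofReal_add_le
      _ = ENNReal.ofReal (Q x) + ε := by rw [ENNReal.ofReal_coe_nnreal]
  · -- lower bound
    have key : ∀ ε : ℝ, 0 < ε → ENNReal.ofReal (Q x - ε) ≤ dimLoc x := by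
      intro ε hε
      rcases le_or_gt (Q x - ε) 0 with h0 | h0
      · simp [ENNReal.ofReal_eq_zero.2 h0]
      set s : ℝ := Q x - ε with hs_def
      have hVopen : IsOpen (Q ⁻¹' Ioi s) := isOpen_Ioi.preimage hQcont
      have hxV : x ∈ Q ⁻¹' Ioi s := by
        simp only [mem_preimage, mem_Ioi, hs_def]
        exact sub_lt_self (Q x) hε
      obtain ⟨η, hη0, hηV⟩ := EMetric.isOpen_iff.1 hVopen x hxV
      refine le_iInf fun U => le_iInf fun hUopen => le_iInf fun hxU => ?_
      obtain ⟨δ', hδ'0, hδ'U⟩ := EMetric.isOpen_iff.1 hUopen x hxU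
      set δ : ℝ≥0∞ := min (min η δ') 1 with hδ_def
      have hδ0 : 0 < δ := lt_min (lt_min hη0 hδ'0) one_pos
      have hδ1 : δ ≤ 1 := min_le_right _ _
      set A := EMetric.ball x δ with hA_def
      have hAU : A ⊆ U :=
        subset_trans (EMetric.ball_subset_ball ((min_le_left _ _).trans (min_le_right _ _))) hδ'U
      have hQA : ∀ a ∈ A, s ≤ Q a := by
        intro a ha
        have : a ∈ EMetric.ball x η :=
          EMetric.ball_subset_ball ((min_le_left _ _).trans (min_le_left _ _)) ha
        exact le_of_lt (hηV this)
      have hpos := (ham x δ hδ0 (lt_of_le_of_lt hδ1 (by norm_num))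
        ⟨x, EMetric.mem_ball_self hδ0⟩).1
      have hH : μH[s] A ≠ 0 := by
        intro h0'
        have hle := lambdaQc_le_hausdorff Q (A := A) EMetric.isOpen_ball.measurableSet h0 hQA
        rw [h0', mul_zero] at hle
        exact hpos.ne' (le_antisymm hle zero_le)
      have hdim : (s.toNNReal : ℝ≥0∞) ≤ dimH A := by
        refine le_dimH_of_hausdorffMeasure_ne_zero ?_
        rw [Real.coe_toNNReal s h0.le]
        exact hH
      calc ENNReal.ofReal s = (s.toNNReal : ℝ≥0∞) := rfl
        _ ≤ dimH A := hdim
        _ ≤ dimH U := dimH_mono hAU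
    refine ENNReal.le_of_forall_pos_le_add fun ε hε _ => ?_
    have hε' : (0:ℝ) < ε := hε
    calc ENNReal.ofReal (Q x) = ENNReal.ofReal (Q x - ε + ε) := by rw [sub_add_cancel]
      _ ≤ ENNReal.ofReal (Q x - ε) + ENNReal.ofReal ε := ENNReal.ofReal_add_le
      _ ≤ dimLoc x + ε := by
          refine add_le_add (key ε hε') ?_
          rw [ENNReal.ofReal_coe_nnreal]
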